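/- Let K ⊆ ℝ^k be a nonempty compact convex set, g : K → ℝ a concave continuous function, and ε > 0. Then there exist two functions ĝ, ḡ : K → ℝ, each equal to the pointwise minimum of a nonempty finite family of affine functions on ℝ^k (hence each concave and piecewise linear), such that ĝ(b) ≤ g(b) ≤ ḡ(b) ≤ ĝ(b) + ε for all b ∈ K. -/

import Mathlib

open Finset

private lemma ciInf_sub_const' {m : ℕ} (hm : 0 < m) (f : Fin m → ℝ) (c : ℝ) :
    (⨅ j : Fin m, (f j - c)) = (⨅ j : Fin m, f j) - c := by
  haveI : Nonempty (Fin m) := ⟨⟨0, hm⟩⟩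
  have hbd : BddBelow (Set.range f) := (Set.finite_range f).bddBelow
  have hbd' : BddBelow (Set.range fun j => f j - c) := (Set.finite_range _).bddBelow
  apply le_antisymm
  · rw [le_sub_iff_add_le]
    apply le_ciInf
    intro j
    have := ciInf_le hbd' j
    linarith
  · apply le_ciInf
    intro j
    have := ciInf_le hbd j
    linarith

private lemma upper_affine_approx
    (k : ℕ) (K : Set (Fin k → ℝ)) (hKne : K.Nonempty) (hKcpt : IsCompact K)
    (hKconv : Convex ℝ K)
    (g : (Fin k → ℝ) → ℝ) (hgconc : ConcaveOn ℝ K g) (hgcont : ContinuousOn g K)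
    (ε : ℝ) (hε : 0 < ε) :
    ∃ (m : ℕ), 0 < m ∧ ∃ (γ : Fin m → Fin k → ℝ) (δ : Fin m → ℝ),
      ∀ b ∈ K, g b ≤ (⨅ j : Fin m, (∑ i, γ j i * b i + δ j)) ∧
        (⨅ j : Fin m, (∑ i, γ j i * b i + δ j)) ≤ g b + ε := by
  classical
  -- Tietze extension of g
  obtain ⟨G, hG⟩ := (⟨K.restrict g, hgcont.restrict⟩ : C(K, ℝ)).exists_restrict_eq
    hKcpt.isClosed
  have hGg : ∀ x ∈ K, G x = g x := by
    intro x hx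
    have := congrFun (congrArg (fun (f : C(K, ℝ)) => (f : K → ℝ)) hG) ⟨x, hx⟩
    exact this
  -- lower bound on g over K
  obtain ⟨b₀, hb₀⟩ := hKne
  have himg : BddBelow (g '' K) := (hKcpt.image_of_continuousOn hgcont).bddBelow
  set m₀ : ℝ := sInf (g '' K) with hm₀
  have hm₀le : ∀ x ∈ K, m₀ ≤ g x := fun x hx => csInf_le himg ⟨x, hx, rfl⟩
  -- truncated hypograph
  set H : Set ((Fin k → ℝ) × ℝ) :=
    {p | p.1 ∈ K ∧ m₀ - 1 ≤ p.2 ∧ p.2 ≤ G p.1} with hH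
  have hHclosed : IsClosed H := by
    apply IsClosed.inter (hKcpt.isClosed.preimage continuous_fst)
    exact IsClosed.inter (isClosed_le continuous_const continuous_snd)
      (isClosed_le continuous_snd (G.continuous.comp continuous_fst))
  have hHconv : Convex ℝ H := by
    intro p hp q hq a b ha hb hab
    obtain ⟨hp1, hp2, hp3⟩ := hp
    obtain ⟨hq1, hq2, hq3⟩ := hq
    have hmem : a • p.1 + b • q.1 ∈ K := hKconv hp1 hq1 ha hb hab
    have h2 : (a • p + b • q).2 = a * p.2 + b * q.2 := rfl
    have h1 : (a • p + b • q).1 = a • p.1 + b • q.1 := rfl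
    refine ⟨by rw [h1]; exact hmem, ?_, ?_⟩
    · rw [h2]
      have hone : a * (m₀ - 1) + b * (m₀ - 1) = m₀ - 1 := by
        rw [← add_mul, hab, one_mul]
      have i1 := mul_le_mul_of_nonneg_left hp2 ha
      have i2 := mul_le_mul_of_nonneg_left hq2 hb
      linarith
    · rw [h1, h2, hGg _ hmem]
      have hc := hgconc.2 hp1 hq1 ha hb hab
      have hpg : p.2 ≤ g p.1 := by rw [← hGg _ hp1]; exact hp3
      have hqg : q.2 ≤ g q.1 := by rw [← hGg _ hq1]; exact hq3
      calc a * p.2 + b * q.2 ≤ a * g p.1 + b * g q.1 := by nlinarith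
        _ = a • g p.1 + b • g q.1 := rfl
        _ ≤ g (a • p.1 + b • q.1) := hc
  -- for each x ∈ K, an affine function above g on K, close to g at x
  have key : ∀ x, x ∈ K → ∃ (γ : Fin k → ℝ) (δ : ℝ),
      (∀ y ∈ K, g y ≤ ∑ i, γ i * y i + δ) ∧ (∑ i, γ i * x i + δ < g x + ε) := by
    intro x hx
    have hpt : ((x, G x + ε) : (Fin k → ℝ) × ℝ) ∉ H := by
      intro h
      have := h.2.2
      simp only at this
      linarith
    obtain ⟨f, u, hfu, hux⟩ := geometric_hahn_banach_closed_point hHconv hHclosed hpt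
    set c : ℝ := f (0, 1) with hc
    have hsplit : ∀ y : Fin k → ℝ, ∀ t : ℝ, f (y, t) = f (y, 0) + t * c := by
      intro y t
      have hyt : (y, t) = (y, (0:ℝ)) + t • ((0 : Fin k → ℝ), (1:ℝ)) := by
        simp [Prod.ext_iff]
      rw [hyt, map_add, map_smul, smul_eq_mul, hc]
    have hmemgraph : ∀ y ∈ K, ((y, g y) : (Fin k → ℝ) × ℝ) ∈ H := by
      intro y hy
      exact ⟨hy, by have := hm₀le y hy; linarith, by simp only; rw [hGg y hy]⟩
    have h1 : f (x, 0) + g x * c < u := by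
      have := hfu _ (hmemgraph x hx)
      rwa [hsplit] at this
    have h2 : u < f (x, 0) + (g x + ε) * c := by
      have := hux
      rw [hGg x hx] at this
      rwa [hsplit] at this
    have hcpos : 0 < c := by nlinarith
    -- linear part coefficients
    set L : (Fin k → ℝ) →ₗ[ℝ] ℝ :=
      (f : ((Fin k → ℝ) × ℝ) →ₗ[ℝ] ℝ).comp (LinearMap.inl ℝ (Fin k → ℝ) ℝ) with hL
    set a : Fin k → ℝ := fun i => L (fun j => if i = j then 1 else 0) with ha
    have hLy : ∀ y : Fin k → ℝ, f (y, 0) = ∑ i, y i * a i := by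
      intro y
      have h0 : f (y, 0) = L y := rfl
      rw [h0, LinearMap.pi_apply_eq_sum_univ L y]
      simp [ha, smul_eq_mul]
    have hval : ∀ y : Fin k → ℝ,
        (∑ i, (-(a i) / c) * y i + u / c) = (u - f (y, 0)) / c := by
      intro y
      rw [hLy y, sub_div, Finset.sum_div]
      have : (∑ i, (-(a i) / c) * y i) = ∑ i, -(y i * a i / c) := by
        apply Finset.sum_congr rfl
        intro i _
        ring
      rw [this, Finset.sum_neg_distrib]
      ring
    refine ⟨fun i => -(a i) / c, u / c, ?_, ?_⟩
    · intro y hy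
      have hfy := hfu _ (hmemgraph y hy)
      rw [hsplit] at hfy
      rw [hval y, le_div_iff₀ hcpos]
      nlinarith
    · rw [hval x, div_lt_iff₀ hcpos]
      nlinarith
  choose! γ₀ δ₀ hkey1 hkey2 using key
  -- open covering
  set U : (Fin k → ℝ) → Set (Fin k → ℝ) :=
    fun x => {y | ∑ i, γ₀ x i * y i + δ₀ x < G y + ε} with hU
  have hUopen : ∀ x, IsOpen (U x) := by
    intro x
    apply isOpen_lt
    · exact (continuous_finset_sum _ fun i _ =>
        (continuous_const.mul (continuous_apply i))).add continuous_const
    · exact (G.continuous).add continuous_const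
  have hUnhds : ∀ x ∈ K, U x ∈ nhds x := by
    intro x hx
    apply (hUopen x).mem_nhds
    show ∑ i, γ₀ x i * x i + δ₀ x < G x + ε
    rw [hGg x hx]
    exact hkey2 x hx
  obtain ⟨t, htK, htcover⟩ := hKcpt.elim_nhds_subcover U hUnhds
  have htne : t.Nonempty := by
    rcases Set.mem_iUnion₂.1 (htcover hb₀) with ⟨x, hxt, _⟩
    exact ⟨x, hxt⟩
  set m := t.card with hm
  have hmpos : 0 < m := Finset.card_pos.2 htne
  haveI : Nonempty (Fin m) := ⟨⟨0, hmpos⟩⟩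
  have hcard : Fintype.card ↥t = m := Fintype.card_coe t
  set e : Fin m ≃ ↥t := (Fintype.equivFinOfCardEq hcard).symm with he
  refine ⟨m, hmpos, fun j => γ₀ (e j), fun j => δ₀ (e j), ?_⟩
  intro b hb
  have hbdd : BddBelow (Set.range fun j : Fin m => ∑ i, γ₀ (e j) i * b i + δ₀ (e j)) :=
    (Set.finite_range _).bddBelow
  constructor
  · apply le_ciInf
    intro j
    exact hkey1 (e j) (htK _ (e j).2) b hb
  · rcases Set.mem_iUnion₂.1 (htcover hb) with ⟨x, hxt, hbx⟩
    have hj : (e (e.symm ⟨x, hxt⟩) : Fin k → ℝ) = x := by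
      rw [Equiv.apply_symm_apply]
    calc (⨅ j : Fin m, (∑ i, γ₀ (e j) i * b i + δ₀ (e j)))
        ≤ ∑ i, γ₀ (e (e.symm ⟨x, hxt⟩)) i * b i + δ₀ (e (e.symm ⟨x, hxt⟩)) :=
          ciInf_le hbdd _
      _ = ∑ i, γ₀ x i * b i + δ₀ x := by rw [hj]
      _ ≤ g b + ε := by
          have : ∑ i, γ₀ x i * b i + δ₀ x < G b + ε := hbx
          rw [hGg b hb] at this
          linarith

/-- Every concave continuous function `g` on a nonempty compact convex
set `K ⊆ ℝ^k` can be `ε`-sandwiched between two functions, each the pointwise minimum of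
a nonempty finite family of affine functions `b ↦ α·b + β` on `ℝ^k`:
`ĝ(b) ≤ g(b) ≤ ḡ(b) ≤ ĝ(b) + ε` for all `b ∈ K`. -/
theorem concave_approx_by_min_of_affine
    (k : ℕ) (K : Set (Fin k → ℝ)) (hKne : K.Nonempty) (hKcpt : IsCompact K)
    (hKconv : Convex ℝ K)
    (g : (Fin k → ℝ) → ℝ) (hgconc : ConcaveOn ℝ K g) (hgcont : ContinuousOn g K)
    (ε : ℝ) (hε : 0 < ε) :
    ∃ (n m : ℕ), 0 < n ∧ 0 < m ∧
      ∃ (α : Fin n → Fin k → ℝ) (β : Fin n → ℝ)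
        (γ : Fin m → Fin k → ℝ) (δ : Fin m → ℝ),
        ∀ b ∈ K,
          (⨅ j : Fin n, (∑ i, α j i * b i + β j)) ≤ g b ∧
          g b ≤ (⨅ j : Fin m, (∑ i, γ j i * b i + δ j)) ∧
          (⨅ j : Fin m, (∑ i, γ j i * b i + δ j))
            ≤ (⨅ j : Fin n, (∑ i, α j i * b i + β j)) + ε := by
  obtain ⟨m, hmpos, γ, δ, hγδ⟩ := upper_affine_approx k K hKne hKcpt hKconv g hgconc
    hgcont (ε / 2) (by linarith)
  refine ⟨m, m, hmpos, hmpos, γ, fun j => δ j - ε / 2, γ, δ, ?_⟩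
  intro b hb
  obtain ⟨hlow, hup⟩ := hγδ b hb
  have hkey : (⨅ j : Fin m, (∑ i, γ j i * b i + (δ j - ε / 2)))
      = (⨅ j : Fin m, (∑ i, γ j i * b i + δ j)) - ε / 2 := by
    have h1 : ∀ j : Fin m, (∑ i, γ j i * b i + (δ j - ε / 2))
        = (∑ i, γ j i * b i + δ j) - ε / 2 := by intro j; ring
    calc (⨅ j : Fin m, (∑ i, γ j i * b i + (δ j - ε / 2)))
        = ⨅ j : Fin m, ((∑ i, γ j i * b i + δ j) - ε / 2) := by
          congr 1; funext j; exact h1 j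
      _ = (⨅ j : Fin m, (∑ i, γ j i * b i + δ j)) - ε / 2 :=
          ciInf_sub_const' hmpos _ _
  rw [hkey]
  refine ⟨by linarith, hlow, by linarith⟩
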